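/- Let D be an additively idempotent division semiring. Then there exists a left D-semimodule that is e-injective but not injective; hence the class of injective left D-semimodules is a proper subclass of the class of e-injective left D-semimodules. -/

import Mathlib

universe u v w w'

/-- A subsemimodule `A ≤ B` is subtractive if `m ∈ A` and `m + m' ∈ A` imply `m' ∈ A`. -/
def IsSubtractive {S : Type u} [Semiring S] {B : Type v} [AddCommMonoid B] [Module S B]
    (A : Submodule S B) : Prop :=
  ∀ m m' : B, m ∈ A → m + m' ∈ A → m' ∈ A

/-- A left `S`-semimodule `M` is e-injective if for every semimodule `B` and every
subtractive subsemimodule `A ≤ B`, every linear map `A → M` extends to `B`, and any two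
linear maps `B → M` agreeing on `A` differ by maps vanishing on `A`. -/
def EInjective (S : Type u) [Semiring S] (M : Type v) [AddCommMonoid M] [Module S M] : Prop :=
  ∀ (B : Type w) [AddCommMonoid B] [Module S B] (A : Submodule S B), IsSubtractive A →
    ((∀ φ : A →ₗ[S] M, ∃ ψ : B →ₗ[S] M, ∀ a : A, ψ (a : B) = φ a) ∧
     (∀ ψ₁ ψ₂ : B →ₗ[S] M, (∀ a ∈ A, ψ₁ a = ψ₂ a) →
       ∃ χ₁ χ₂ : B →ₗ[S] M, (∀ a ∈ A, χ₁ a = 0) ∧ (∀ a ∈ A, χ₂ a = 0) ∧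
         ψ₁ + χ₁ = ψ₂ + χ₂))

/-- A left `S`-semimodule `M` is injective if every linear map into `M` extends along
every injective linear map. -/
def SInjective (S : Type u) [Semiring S] (M : Type v) [AddCommMonoid M] [Module S M] : Prop :=
  ∀ (A : Type w) (B : Type w') [AddCommMonoid A] [Module S A] [AddCommMonoid B] [Module S B]
    (μ : A →ₗ[S] B), Function.Injective μ →
    ∀ φ : A →ₗ[S] M, ∃ ψ : B →ₗ[S] M, ∀ a : A, ψ (μ a) = φ a

/-! ### Auxiliary material -/

/-- The five-element lattice `M₃`. -/
inductive MThree : Type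
  | bot | a | b | c | top
  deriving DecidableEq

instance : Fintype MThree :=
  ⟨⟨↑[MThree.bot, MThree.a, MThree.b, MThree.c, MThree.top], by decide⟩,
    fun x => by cases x <;> decide⟩

namespace MThree

def join : MThree → MThree → MThree
  | bot, y => y
  | y, bot => y
  | top, _ => top
  | _, top => top
  | a, a => a
  | b, b => b
  | c, c => c
  | _, _ => top

instance : Zero MThree := ⟨bot⟩
instance : Add MThree := ⟨join⟩

instance : AddCommMonoid MThree where
  add := (· + ·)
  zero := 0
  add_assoc := by decide
  zero_add := by decide
  add_zero := by decide
  add_comm := by decide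
  nsmul := nsmulRec

lemma idem : ∀ x : MThree, x + x = x := by decide
lemma top_absorb : ∀ x : MThree, x + top = top := by decide

end MThree

/-- `M₃` with an extra element `xx` adjoined, with `xx ⊔ a = a`, `xx ⊔ b = b`,
`xx ⊔ c = ⊤`. -/
inductive BSix : Type
  | bot | xx | a | b | c | top
  deriving DecidableEq

instance : Fintype BSix :=
  ⟨⟨↑[BSix.bot, BSix.xx, BSix.a, BSix.b, BSix.c, BSix.top], by decide⟩,
    fun x => by cases x <;> decide⟩

namespace BSix

def join : BSix → BSix → BSix
  | bot, y => y
  | y, bot => y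
  | top, _ => top
  | _, top => top
  | xx, xx => xx
  | xx, a => a
  | a, xx => a
  | xx, b => b
  | b, xx => b
  | xx, c => top
  | c, xx => top
  | a, a => a
  | b, b => b
  | c, c => c
  | _, _ => top

instance : Zero BSix := ⟨bot⟩
instance : Add BSix := ⟨join⟩

instance : AddCommMonoid BSix where
  add := (· + ·)
  zero := 0
  add_assoc := by decide
  zero_add := by decide
  add_zero := by decide
  add_comm := by decide
  nsmul := nsmulRec

lemma idem : ∀ x : BSix, x + x = x := by decide

end BSix

/-- The inclusion of `M₃` into `B₆`. -/
def mIncl : MThree → BSix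
  | .bot => .bot
  | .a => .a
  | .b => .b
  | .c => .c
  | .top => .top

lemma mIncl_add : ∀ x y : MThree, mIncl (x + y) = mIncl x + mIncl y := by decide
lemma mIncl_inj : ∀ x y : MThree, mIncl x = mIncl y → x = y := by decide

lemma key : ∀ p : MThree,
    ¬(p + MThree.a = MThree.a ∧ p + MThree.b = MThree.b ∧ p + MThree.c = MThree.top) := by
  decide

section IdemModule

variable {D : Type u} [DivisionSemiring D]

lemma zerosumfree (hai : ∀ a : D, a + a = a) {x y : D} (h : x + y = 0) : x = 0 := by
  have h1 : x = x + (x + y) := by rw [h, add_zero]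
  rw [← add_assoc, hai x] at h1
  rw [h1, h]

open Classical in
/-- Any additively idempotent commutative monoid is a module over an additively
idempotent division semiring, with `d • x = x` for `d ≠ 0`. -/
noncomputable def idemModule (hai : ∀ a : D, a + a = a) (L : Type v) [AddCommMonoid L]
    (hL : ∀ x : L, x + x = x) : Module D L where
  smul d x := if d = 0 then 0 else x
  one_smul x := by
    show (if (1 : D) = 0 then 0 else x) = x
    rw [if_neg one_ne_zero]
  mul_smul d e x := by
    show (if d * e = 0 then 0 else x) = (if d = 0 then 0 else (if e = 0 then 0 else x))
    by_cases hd : d = 0 <;> by_cases he : e = 0 <;> simp [hd, he]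
  smul_zero d := by
    show (if d = 0 then 0 else (0 : L)) = 0
    split <;> rfl
  smul_add d x y := by
    show (if d = 0 then 0 else x + y) = (if d = 0 then 0 else x) + (if d = 0 then 0 else y)
    split <;> simp
  add_smul d e x := by
    show (if d + e = 0 then 0 else x) = (if d = 0 then 0 else x) + (if e = 0 then 0 else x)
    by_cases hd : d = 0 <;> by_cases he : e = 0
    · simp [hd, he]
    · simp [hd, he]
    · simp [hd, he]
    · have hde : d + e ≠ 0 := fun h => hd (zerosumfree hai h)
      rw [if_neg hde, if_neg hd, if_neg he, hL]
  zero_smul x := by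
    show (if (0 : D) = 0 then 0 else x) = 0
    rw [if_pos rfl]

/-- Every semimodule with an absorbing top element over an additively idempotent
division semiring is e-injective. -/
theorem eInjective_of_top {M : Type v} [AddCommMonoid M] [Module D M]
    (hai : ∀ a : D, a + a = a)
    (t : M) (htop : ∀ x : M, x + t = t) (hst : ∀ d : D, d ≠ 0 → d • t = t) :
    EInjective.{u, v, w} D M := by
  classical
  intro B _ _ A hA
  -- every module over `D` is additively idempotent
  have hBi : ∀ x : B, x + x = x := fun x => by
    have : x + x = (1 + 1 : D) • x := by rw [add_smul, one_smul]
    rw [this, hai 1, one_smul]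
  have hnotmem : ∀ x y : B, y ∉ A → x + y ∉ A := by
    intro x y hy hxy
    exact hy (hA (x + y) y hxy (by rw [add_assoc, hBi y]; exact hxy))
  -- the key extension construction
  have ext : ∀ φ : A →ₗ[D] M, ∃ ψ : B →ₗ[D] M,
      (∀ a : A, ψ (a : B) = φ a) ∧ (∀ x : B, x ∉ A → ψ x = t) := by
    intro φ
    refine ⟨⟨⟨fun x => if h : x ∈ A then φ ⟨x, h⟩ else t, ?_⟩, ?_⟩, ?_, ?_⟩
    · intro x y
      by_cases hx : x ∈ A <;> by_cases hy : y ∈ A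
      · have hxy : x + y ∈ A := A.add_mem hx hy
        simp only [dif_pos hxy, dif_pos hx, dif_pos hy]
        have : (⟨x + y, hxy⟩ : A) = ⟨x, hx⟩ + ⟨y, hy⟩ := rfl
        rw [this, map_add]
      · have hxy : x + y ∉ A := hnotmem x y hy
        simp only [dif_neg hxy, dif_pos hx, dif_neg hy, htop]
      · have hxy : x + y ∉ A := by
          rw [add_comm]; exact hnotmem y x hx
        simp only [dif_neg hxy, dif_neg hx, dif_pos hy]
        rw [add_comm, htop]
      · have hxy : x + y ∉ A := hnotmem x y hy
        simp only [dif_neg hxy, dif_neg hx, dif_neg hy, htop]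
    · intro d x
      simp only [RingHom.id_apply]
      by_cases hd : d = 0
      · subst hd
        rw [zero_smul, zero_smul]
        have h0 : (0 : B) ∈ A := A.zero_mem
        simp only [dif_pos h0]
        have : (⟨(0 : B), h0⟩ : A) = 0 := rfl
        rw [this, map_zero]
      · by_cases hx : x ∈ A
        · have hdx : d • x ∈ A := A.smul_mem d hx
          simp only [dif_pos hdx, dif_pos hx]
          have : (⟨d • x, hdx⟩ : A) = d • ⟨x, hx⟩ := rfl
          rw [this, map_smul]
        · have hdx : d • x ∉ A := by
            intro h
            exact hx (by simpa [inv_smul_smul₀ hd] using A.smul_mem d⁻¹ h)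
          simp only [dif_neg hdx, dif_neg hx, hst d hd]
    · intro a
      simp only [LinearMap.coe_mk, AddHom.coe_mk, dif_pos a.2]
    · intro x hx
      simp only [LinearMap.coe_mk, AddHom.coe_mk, dif_neg hx]
  constructor
  · intro φ
    obtain ⟨ψ, h1, _⟩ := ext φ
    exact ⟨ψ, h1⟩
  · intro ψ₁ ψ₂ h
    obtain ⟨χ, hχ0, hχt⟩ := ext 0
    refine ⟨χ, χ, ?_, ?_, ?_⟩
    · intro x hx; simpa using hχ0 ⟨x, hx⟩
    · intro x hx; simpa using hχ0 ⟨x, hx⟩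
    · ext x
      simp only [LinearMap.add_apply]
      by_cases hx : x ∈ A
      · rw [h x hx]
      · rw [hχt x hx, htop, htop]

end IdemModule

lemma ulift_idem {α : Type} [AddCommMonoid α] (h : ∀ x : α, x + x = x) :
    ∀ x : ULift.{r} α, x + x = x := fun x =>
  match x with
  | .up v => congrArg ULift.up (h v)

noncomputable def mod3 {D : Type u} [DivisionSemiring D] (hai : ∀ a : D, a + a = a) :
    Module D (ULift.{r} MThree) :=
  idemModule hai _ (ulift_idem MThree.idem)

noncomputable def mod6 {D : Type u} [DivisionSemiring D] (hai : ∀ a : D, a + a = a) :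
    Module D (ULift.{r} BSix) :=
  idemModule hai _ (ulift_idem BSix.idem)

theorem not_sInjective {D : Type u} [DivisionSemiring D] (hai : ∀ a : D, a + a = a) :
    ¬ @SInjective.{u, u, w, w'} D _ (ULift.{u} MThree) _ (mod3 hai) := by
  classical
  intro hS
  letI instM : Module D (ULift.{u} MThree) := mod3 hai
  letI instA : Module D (ULift.{w} MThree) := mod3 hai
  letI instB : Module D (ULift.{w'} BSix) := mod6 hai
  have hsmulM : ∀ (d : D) (x : ULift.{u} MThree),
      d • x = if d = 0 then 0 else x := fun d x => rfl
  have hsmulA : ∀ (d : D) (x : ULift.{w} MThree),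
      d • x = if d = 0 then 0 else x := fun d x => rfl
  have hsmulB : ∀ (d : D) (x : ULift.{w'} BSix),
      d • x = if d = 0 then 0 else x := fun d x => rfl
  -- the inclusion μ : M₃ → B₆
  let μ : ULift.{w} MThree →ₗ[D] ULift.{w'} BSix :=
    { toFun := fun x => ULift.up (mIncl x.down)
      map_add' := fun x y => by
        cases x with
        | up v =>
          cases y with
          | up w => exact congrArg ULift.up (mIncl_add v w)
      map_smul' := fun d x => by
        simp only [RingHom.id_apply]
        rw [hsmulA d x, hsmulB]
        by_cases hd : d = 0
        · rw [if_pos hd, if_pos hd]; rfl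
        · rw [if_neg hd, if_neg hd] }
  have hinj : Function.Injective μ := by
    intro x y h
    cases x with
    | up v =>
      cases y with
      | up w =>
        exact congrArg ULift.up (mIncl_inj v w (congrArg ULift.down h))
  let φ : ULift.{w} MThree →ₗ[D] ULift.{u} MThree :=
    { toFun := fun x => ULift.up x.down
      map_add' := fun x y => rfl
      map_smul' := fun d x => by
        simp only [RingHom.id_apply]
        rw [hsmulA d x, hsmulM]
        by_cases hd : d = 0
        · rw [if_pos hd, if_pos hd]; rfl
        · rw [if_neg hd, if_neg hd] }
  obtain ⟨ψ, hψ⟩ := hS (ULift.{w} MThree) (ULift.{w'} BSix) μ hinj φ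
  -- derive the contradiction
  have ha : ψ (ULift.up BSix.a) = ULift.up MThree.a := hψ (ULift.up MThree.a)
  have hb : ψ (ULift.up BSix.b) = ULift.up MThree.b := hψ (ULift.up MThree.b)
  have hc : ψ (ULift.up BSix.c) = ULift.up MThree.c := hψ (ULift.up MThree.c)
  have ht : ψ (ULift.up BSix.top) = ULift.up MThree.top := hψ (ULift.up MThree.top)
  set p : ULift.{u} MThree := ψ (ULift.up BSix.xx) with hp
  have e1 : p + ULift.up MThree.a = ULift.up MThree.a := by
    rw [hp, ← ha, ← map_add]
    have h6 : (ULift.up BSix.xx + ULift.up BSix.a : ULift.{w'} BSix) = ULift.up BSix.a := rfl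
    rw [h6, ha]
  have e2 : p + ULift.up MThree.b = ULift.up MThree.b := by
    rw [hp, ← hb, ← map_add]
    have h6 : (ULift.up BSix.xx + ULift.up BSix.b : ULift.{w'} BSix) = ULift.up BSix.b := rfl
    rw [h6, hb]
  have e3 : p + ULift.up MThree.c = ULift.up MThree.top := by
    rw [hp, ← hc, ← map_add]
    have h6 : (ULift.up BSix.xx + ULift.up BSix.c : ULift.{w'} BSix) = ULift.up BSix.top := rfl
    rw [h6, ht]
  exact key p.down ⟨congrArg ULift.down e1, congrArg ULift.down e2, congrArg ULift.down e3⟩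

/-- Proposition-Example 4.6: over an additively idempotent division semiring there is a
semimodule that is e-injective but not injective. -/
theorem exists_eInjective_not_injective {D : Type u} [DivisionSemiring D]
    (hai : ∀ a : D, a + a = a) :
    ∃ (M : Type u) (_ : AddCommMonoid M) (_ : Module D M),
      EInjective D M ∧ ¬ SInjective D M := by
  classical
  letI instM : Module D (ULift.{u} MThree) := mod3 hai
  refine ⟨ULift.{u} MThree, inferInstance, instM, ?_, ?_⟩
  · -- e-injectivity via the absorbing top
    refine eInjective_of_top hai (ULift.up MThree.top) ?_ ?_
    · intro x
      cases x with
      | up v => exact congrArg ULift.up (MThree.top_absorb v)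
    · intro d hd
      show (if d = 0 then 0 else ULift.up MThree.top) = ULift.up MThree.top
      rw [if_neg hd]
  · exact not_sInjective hai
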